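/- (Norm preservation under the hash map, exact second moment) For the random hashed feature map, E[‖x‖_φ²] = ‖x‖₂² for every x ∈ R^d. -/

import Mathlib

open Finset

/-- Sign associated to a boolean. -/
noncomputable def sgn (b : Bool) : ℝ := if b then 1 else -1

/-- Hashed inner product for fixed hash `h` and sign `ξ`. -/
noncomputable def hip {d m : ℕ} (h : Fin d → Fin m) (ξ : Fin d → Bool)
    (x x' : Fin d → ℝ) : ℝ :=
  ∑ k : Fin m,
    (∑ j ∈ Finset.univ.filter (fun j => h j = k), sgn (ξ j) * x j) *
    (∑ j ∈ Finset.univ.filter (fun j => h j = k), sgn (ξ j) * x' j)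

/-- Expectation over the uniformly random pair `(h, ξ)`. -/
noncomputable def hashExp (d m : ℕ) (f : (Fin d → Fin m) → (Fin d → Bool) → ℝ) : ℝ :=
  (∑ h : Fin d → Fin m, ∑ ξ : Fin d → Bool, f h ξ) / ((m : ℝ) ^ d * 2 ^ d)

lemma sgn_mul_self (b : Bool) : sgn b * sgn b = 1 := by cases b <;> simp [sgn]

lemma sgn_not (b : Bool) : sgn (!b) = - sgn b := by cases b <;> simp [sgn]

lemma sum_sgn_zero {d : ℕ} {i j : Fin d} (hij : i ≠ j) :
    ∑ ξ : Fin d → Bool, sgn (ξ i) * sgn (ξ j) = 0 := by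
  have hinv : Function.Involutive
      (fun ξ : Fin d → Bool => Function.update ξ i (!(ξ i))) := by
    intro ξ; funext k
    by_cases hk : k = i
    · subst hk; simp
    · simp [Function.update_of_ne hk]
  set e : Equiv.Perm (Fin d → Bool) := hinv.toPerm with he
  have key := Equiv.sum_comp e (fun ξ : Fin d → Bool => sgn (ξ i) * sgn (ξ j))
  have heq : ∀ ξ : Fin d → Bool,
      sgn (e ξ i) * sgn (e ξ j) = -(sgn (ξ i) * sgn (ξ j)) := by
    intro ξ
    have h1 : e ξ i = !(ξ i) := by
      simp [he, Function.Involutive.toPerm]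
    have h2 : e ξ j = ξ j := by
      simp [he, Function.Involutive.toPerm, Function.update_of_ne (Ne.symm hij)]
    rw [h1, h2, sgn_not]; ring
  simp only [heq, Finset.sum_neg_distrib] at key
  linarith

lemma hip_eq {d m : ℕ} (h : Fin d → Fin m) (ξ : Fin d → Bool) (x : Fin d → ℝ) :
    hip h ξ x x = ∑ i : Fin d, ∑ j : Fin d,
      (if h i = h j then (1:ℝ) else 0) * ((sgn (ξ i) * sgn (ξ j)) * (x i * x j)) := by
  unfold hip
  have step : ∀ k : Fin m,
      (∑ j ∈ Finset.univ.filter (fun j => h j = k), sgn (ξ j) * x j) *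
      (∑ j ∈ Finset.univ.filter (fun j => h j = k), sgn (ξ j) * x j)
      = ∑ i : Fin d, ∑ j : Fin d,
          (if h i = k ∧ h j = k then (1:ℝ) else 0)
            * ((sgn (ξ i) * sgn (ξ j)) * (x i * x j)) := by
    intro k
    have l : (∑ j ∈ Finset.univ.filter (fun j => h j = k), sgn (ξ j) * x j)
        = ∑ j : Fin d, (if h j = k then (1:ℝ) else 0) * (sgn (ξ j) * x j) := by
      rw [Finset.sum_filter]
      exact Finset.sum_congr rfl (fun j _ => by by_cases hj : h j = k <;> simp [hj])
    rw [l, Finset.sum_mul_sum]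
    refine Finset.sum_congr rfl fun i _ => Finset.sum_congr rfl fun j _ => ?_
    by_cases hi : h i = k <;> by_cases hj : h j = k <;>
      simp [hi, hj] <;> ring
  rw [Finset.sum_congr rfl (fun k _ => step k)]
  rw [Finset.sum_comm]
  refine Finset.sum_congr rfl (fun i _ => ?_)
  rw [Finset.sum_comm]
  refine Finset.sum_congr rfl (fun j _ => ?_)
  by_cases hij : h i = h j
  · rw [if_pos hij]
    rw [Finset.sum_eq_single (h i)]
    · rw [if_pos ⟨rfl, hij.symm⟩]
    · intro k _ hk
      rw [if_neg (by tauto)]; ring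
    · intro hmem; exact absurd (Finset.mem_univ _) hmem
  · rw [if_neg hij]
    refine Eq.trans (Finset.sum_eq_zero fun k _ => ?_) (by ring)
    rw [if_neg (by rintro ⟨h1, h2⟩; exact hij (h1.trans h2.symm))]
    ring

lemma swap4 {d m : ℕ} (F : (Fin d → Fin m) → (Fin d → Bool) → Fin d → Fin d → ℝ) :
    (∑ h : Fin d → Fin m, ∑ ξ : Fin d → Bool, ∑ i : Fin d, ∑ j : Fin d, F h ξ i j)
    = ∑ i : Fin d, ∑ j : Fin d, ∑ ξ : Fin d → Bool, ∑ h : Fin d → Fin m, F h ξ i j := by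
  calc (∑ h : Fin d → Fin m, ∑ ξ : Fin d → Bool, ∑ i : Fin d, ∑ j : Fin d, F h ξ i j)
      = ∑ h : Fin d → Fin m, ∑ i : Fin d, ∑ ξ : Fin d → Bool, ∑ j : Fin d, F h ξ i j :=
        Finset.sum_congr rfl fun _ _ => Finset.sum_comm
    _ = ∑ i : Fin d, ∑ h : Fin d → Fin m, ∑ ξ : Fin d → Bool, ∑ j : Fin d, F h ξ i j :=
        Finset.sum_comm
    _ = ∑ i : Fin d, ∑ h : Fin d → Fin m, ∑ j : Fin d, ∑ ξ : Fin d → Bool, F h ξ i j :=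
        Finset.sum_congr rfl fun _ _ => Finset.sum_congr rfl fun _ _ => Finset.sum_comm
    _ = ∑ i : Fin d, ∑ j : Fin d, ∑ h : Fin d → Fin m, ∑ ξ : Fin d → Bool, F h ξ i j :=
        Finset.sum_congr rfl fun _ _ => Finset.sum_comm
    _ = ∑ i : Fin d, ∑ j : Fin d, ∑ ξ : Fin d → Bool, ∑ h : Fin d → Fin m, F h ξ i j :=
        Finset.sum_congr rfl fun _ _ => Finset.sum_congr rfl fun _ _ => Finset.sum_comm

/-- Norm preservation in expectation: `E[‖x‖_φ²] = ‖x‖₂²`. -/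
theorem hash_norm_second_moment (d m : ℕ) (hm : 0 < m) (x : Fin d → ℝ) :
    hashExp d m (fun h ξ => hip h ξ x x) = ∑ i : Fin d, x i ^ 2 := by
  unfold hashExp
  have main : (∑ h : Fin d → Fin m, ∑ ξ : Fin d → Bool, hip h ξ x x)
      = ((m : ℝ) ^ d * 2 ^ d) * ∑ i : Fin d, x i ^ 2 := by
    have step1 : (∑ h : Fin d → Fin m, ∑ ξ : Fin d → Bool, hip h ξ x x)
        = ∑ i : Fin d, ∑ j : Fin d,
            (∑ h : Fin d → Fin m, if h i = h j then (1:ℝ) else 0)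
            * ((∑ ξ : Fin d → Bool, sgn (ξ i) * sgn (ξ j)) * (x i * x j)) := by
      simp only [hip_eq]
      rw [swap4 (fun h ξ i j =>
        (if h i = h j then (1:ℝ) else 0) * ((sgn (ξ i) * sgn (ξ j)) * (x i * x j)))]
      refine Finset.sum_congr rfl (fun i _ => Finset.sum_congr rfl (fun j _ => ?_))
      simp only [← Finset.sum_mul]
      rw [← Finset.mul_sum, ← Finset.sum_mul]
    rw [step1, Finset.mul_sum]
    refine Finset.sum_congr rfl (fun i _ => ?_)
    rw [Finset.sum_eq_single i]
    · rw [show (∑ h : Fin d → Fin m, if h i = h i then (1:ℝ) else 0) = (m:ℝ)^d by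
          simp [Fintype.card_fun],
        show (∑ ξ : Fin d → Bool, sgn (ξ i) * sgn (ξ i)) = (2:ℝ)^d by
          simp [sgn_mul_self, Fintype.card_fun]]
      ring
    · intro j _ hji
      rw [sum_sgn_zero (Ne.symm hji)]; ring
    · intro hmem; exact absurd (Finset.mem_univ _) hmem
  rw [main, mul_comm, mul_div_assoc, div_self (by positivity), mul_one]
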